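/- There is a well-defined surjective group homomorphism f from the pure braid group Pₙ (n ≥ 3) to the free group F₂ = ⟨x,y⟩ defined for fixed indices i < j < k in {1,…,n} by f(A_{i,j}) = x, f(A_{i,k}) = y, f(A_{j,k}) = y⁻¹x⁻¹, and f(A_{r,s}) = 1 for all other generators. -/

import Mathlib

/-- Index type for the generators `A_{i,j}`, `i < j`, of the pure braid group. -/
def PBGen (n : ℕ) : Type := {p : Fin n × Fin n // p.1 < p.2}

/-- The free-group generator corresponding to `A_{i,j}`. -/
def A {n : ℕ} (i j : Fin n) (h : i < j) : FreeGroup (PBGen n) :=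
  FreeGroup.of ⟨(i, j), h⟩

/-- The standard pure braid relators. -/
def pureBraidRels (n : ℕ) : Set (FreeGroup (PBGen n)) :=
  { w | ∃ (i j r s : Fin n) (hij : i < j) (hrs : r < s),
      (((i < r ∧ s < j) ∨ s < i) ∧
        w = (A r s hrs)⁻¹ * A i j hij * A r s hrs * (A i j hij)⁻¹)
    ∨ (∃ hrj : r < j, s = i ∧
        w = (A r s hrs)⁻¹ * A i j hij * A r s hrs *
          (A r j hrj * A i j hij * (A r j hrj)⁻¹)⁻¹)
    ∨ (∃ hsj : s < j, r = i ∧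
        w = (A r s hrs)⁻¹ * A i j hij * A r s hrs *
          (A i j hij * A s j hsj * A i j hij * (A s j hsj)⁻¹ * (A i j hij)⁻¹)⁻¹)
    ∨ (∃ (hrj : r < j) (hsj : s < j), r < i ∧ i < s ∧
        w = (A r s hrs)⁻¹ * A i j hij * A r s hrs *
          ((A r j hrj * A s j hsj * (A r j hrj)⁻¹ * (A s j hsj)⁻¹) * A i j hij *
            (A r j hrj * A s j hsj * (A r j hrj)⁻¹ * (A s j hsj)⁻¹)⁻¹)⁻¹) }

/-- The pure braid group `Pₙ`, as a presented group. -/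
def PureBraid (n : ℕ) : Type := PresentedGroup (pureBraidRels n)

instance (n : ℕ) : Group (PureBraid n) := by unfold PureBraid; infer_instance

/-- The generator `A_{i,j}` of the pure braid group. -/
def gen {n : ℕ} (i j : Fin n) (h : i < j) : PureBraid n :=
  PresentedGroup.of (⟨(i, j), h⟩ : PBGen n)


section Aux

variable {n : ℕ}

private def V (i j k p q : Fin n) : FreeGroup (Fin 2) :=
  if p = i ∧ q = j then FreeGroup.of 0
  else if p = i ∧ q = k then FreeGroup.of 1
  else if p = j ∧ q = k then (FreeGroup.of 1)⁻¹ * (FreeGroup.of 0)⁻¹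
  else 1
private def vfun (i j k : Fin n) (g : PBGen n) : FreeGroup (Fin 2) :=
  V i j k g.1.1 g.1.2
private lemma classify (i j k p q : Fin n) :
    (i = p ∧ j = q) ∨ (i = p ∧ k = q) ∨ (j = p ∧ k = q) ∨ V i j k p q = 1 := by
  by_cases h1 : p = i ∧ q = j
  · exact Or.inl ⟨h1.1.symm, h1.2.symm⟩
  by_cases h2 : p = i ∧ q = k
  · exact Or.inr (Or.inl ⟨h2.1.symm, h2.2.symm⟩)
  by_cases h3 : p = j ∧ q = k
  · exact Or.inr (Or.inr (Or.inl ⟨h3.1.symm, h3.2.symm⟩))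
  · exact Or.inr (Or.inr (Or.inr (by simp [V, h1, h2, h3])))

set_option maxHeartbeats 2000000 in
private lemma relsOne (i j k : Fin n) (hij : i < j) (hjk : j < k) :
    ∀ w ∈ pureBraidRels n, FreeGroup.lift (vfun i j k) w = 1 := by
  have VIJ : V i j k i j = FreeGroup.of 0 := by simp [V]
  have VIK : V i j k i k = FreeGroup.of 1 := by simp [V, hjk.ne']
  have VJK : V i j k j k = (FreeGroup.of 1)⁻¹ * (FreeGroup.of 0)⁻¹ := by
    simp [V, hij.ne']
  have NE0 : ¬ (FreeGroup.of (0 : Fin 2) = 1) := by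
    intro h; have := congrArg FreeGroup.toWord h; simp at this
  have NE1 : ¬ (FreeGroup.of (1 : Fin 2) = 1) := by
    intro h; have := congrArg FreeGroup.toWord h; simp at this
  have NE2 : ¬ ((FreeGroup.of (1 : Fin 2))⁻¹ * (FreeGroup.of (0 : Fin 2))⁻¹ = 1) := by
    intro h
    have h1 := congrArg (FreeGroup.lift (fun _ : Fin 2 => Multiplicative.ofAdd (1 : ℤ))) h
    simp only [map_mul, map_inv, FreeGroup.lift_apply_of, map_one] at h1
    have h2 := congrArg Multiplicative.toAdd h1
    simp at h2
  have LA : ∀ (p q : Fin n) (h : p < q),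
      FreeGroup.lift (vfun i j k) (A p q h) = V i j k p q := by
    intro p q h; exact FreeGroup.lift_apply_of (f := vfun i j k) (x := (⟨(p, q), h⟩ : PBGen n))
  rintro w ⟨a, b, c, d, hab, hcd, H⟩
  rcases H with ⟨hcond, rfl⟩ | ⟨hcb, rfl, rfl⟩ | ⟨hdb, rfl, rfl⟩ | ⟨hcb, hdb, hca, had, rfl⟩
  · simp only [map_mul, map_inv, LA]
    have C1 := classify i j k c d
    have C2 := classify i j k a b
    rcases C1 with ⟨e1a, e1b⟩ | ⟨e1a, e1b⟩ | ⟨e1a, e1b⟩ | h1 <;>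
      rcases C2 with ⟨e2a, e2b⟩ | ⟨e2a, e2b⟩ | ⟨e2a, e2b⟩ | h2 <;>
      first
        | (exfalso; simp only [Fin.lt_def, Fin.ext_iff] at *; omega)
        | (simp_all only [] <;> group)
        | (simp_all only [V] <;> group)
  · simp only [map_mul, map_inv, LA]
    have C1 := classify i j k c d
    have C2 := classify i j k d b
    have C3 := classify i j k c b
    rcases C1 with ⟨e1a, e1b⟩ | ⟨e1a, e1b⟩ | ⟨e1a, e1b⟩ | h1 <;>
      rcases C2 with ⟨e2a, e2b⟩ | ⟨e2a, e2b⟩ | ⟨e2a, e2b⟩ | h2 <;>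
      rcases C3 with ⟨e3a, e3b⟩ | ⟨e3a, e3b⟩ | ⟨e3a, e3b⟩ | h3 <;>
      first
        | (exfalso; simp only [Fin.lt_def, Fin.ext_iff] at *; omega)
        | (simp_all only [] <;> group)
        | (simp_all only [V] <;> group)
  · simp only [map_mul, map_inv, LA]
    have C1 := classify i j k c d
    have C2 := classify i j k c b
    have C3 := classify i j k d b
    rcases C1 with ⟨e1a, e1b⟩ | ⟨e1a, e1b⟩ | ⟨e1a, e1b⟩ | h1 <;>
      rcases C2 with ⟨e2a, e2b⟩ | ⟨e2a, e2b⟩ | ⟨e2a, e2b⟩ | h2 <;>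
      rcases C3 with ⟨e3a, e3b⟩ | ⟨e3a, e3b⟩ | ⟨e3a, e3b⟩ | h3 <;>
      first
        | (exfalso; simp only [Fin.lt_def, Fin.ext_iff] at *; omega)
        | (simp_all only [] <;> group)
        | (simp_all only [V] <;> group)
  · simp only [map_mul, map_inv, LA]
    have C1 := classify i j k c d
    have C2 := classify i j k a b
    have C3 := classify i j k c b
    have C4 := classify i j k d b
    rcases C1 with ⟨e1a, e1b⟩ | ⟨e1a, e1b⟩ | ⟨e1a, e1b⟩ | h1 <;>
      rcases C2 with ⟨e2a, e2b⟩ | ⟨e2a, e2b⟩ | ⟨e2a, e2b⟩ | h2 <;>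
      rcases C3 with ⟨e3a, e3b⟩ | ⟨e3a, e3b⟩ | ⟨e3a, e3b⟩ | h3 <;>
      rcases C4 with ⟨e4a, e4b⟩ | ⟨e4a, e4b⟩ | ⟨e4a, e4b⟩ | h4 <;>
      first
        | (exfalso; simp only [Fin.lt_def, Fin.ext_iff] at *; omega)
        | (simp_all only [] <;> group)
        | (simp_all only [V] <;> group)

end Aux

/-- For `n ≥ 3` and fixed `i < j < k`, the assignment `A_{i,j} ↦ x`,
`A_{i,k} ↦ y`, `A_{j,k} ↦ y⁻¹x⁻¹`, and `A_{r,s} ↦ 1` for all other generators,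
determines a well-defined surjective homomorphism `Pₙ → F₂`. -/
theorem pureBraid_onto_F2 (n : ℕ) (hn : 3 ≤ n) (i j k : Fin n)
    (hij : i < j) (hjk : j < k) :
    ∃ f : PureBraid n →* FreeGroup (Fin 2),
      Function.Surjective f ∧
      f (gen i j hij) = FreeGroup.of 0 ∧
      f (gen i k (hij.trans hjk)) = FreeGroup.of 1 ∧
      f (gen j k hjk) = (FreeGroup.of 1)⁻¹ * (FreeGroup.of 0)⁻¹ ∧
      ∀ (r s : Fin n) (hrs : r < s),
        ¬((r = i ∧ s = j) ∨ (r = i ∧ s = k) ∨ (r = j ∧ s = k)) →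
          f (gen r s hrs) = 1 := by
  have hik := hij.trans hjk
  set f : PureBraid n →* FreeGroup (Fin 2) :=
    PresentedGroup.toGroup (relsOne i j k hij hjk) with hfdef
  have hf : ∀ (p q : Fin n) (h : p < q), f (gen p q h) = V i j k p q := by
    intro p q h
    exact PresentedGroup.toGroup.of (relsOne i j k hij hjk)
  have hg0 : f (gen i j hij) = FreeGroup.of 0 := by rw [hf]; simp [V]
  have hg1 : f (gen i k hik) = FreeGroup.of 1 := by rw [hf]; simp [V, hjk.ne']
  have hg2 : f (gen j k hjk) = (FreeGroup.of 1)⁻¹ * (FreeGroup.of 0)⁻¹ := by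
    rw [hf]; simp [V, hij.ne']
  refine ⟨f, ?_, hg0, hg1, hg2, ?_⟩
  · set g : FreeGroup (Fin 2) →* PureBraid n :=
      FreeGroup.lift (fun t => if t = 0 then gen i j hij else gen i k hik) with hgdef
    have hcomp : f.comp g = MonoidHom.id _ := by
      apply FreeGroup.ext_hom
      intro t
      fin_cases t
      · simp [hgdef, FreeGroup.lift_apply_of, hg0]
      · simp [hgdef, FreeGroup.lift_apply_of, hg1]
    intro w
    refine ⟨g w, ?_⟩
    have := congrArg (fun φ => φ w) hcomp
    simpa using this
  · intro r s hrs hns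
    rw [hf]
    simp only [V]
    rw [if_neg (fun h => hns (Or.inl h)),
        if_neg (fun h => hns (Or.inr (Or.inl h))),
        if_neg (fun h => hns (Or.inr (Or.inr h)))]
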